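/- Gradient bound at the projected test point: let f : E → ℝ be twice continuously differentiable with L-Lipschitz-continuous Hessian (L > 0). Fix x ∈ E, let H be a symmetric positive semidefinite linear map, let P : E → E be an orthogonal projection (symmetric and idempotent) with H∘P = H and ‖(H − ∇²f(x))∘P‖ ≤ η for some η ≥ 0, and let x⁺ ∈ E satisfy ∇f(x) + (H + αI)(x⁺ − x) = 0 with α = (L/2)·r + η, where r := ‖x⁺ − x‖. Define y⁺ := x + P(x⁺ − x). Then ‖∇f(y⁺)‖ ≤ 2η·r + L·r². -/

import Mathlib

open scoped RealInnerProductSpace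
open Real Set

def IsSymmPSD {n : ℕ} (H : EuclideanSpace ℝ (Fin n) →L[ℝ] EuclideanSpace ℝ (Fin n)) : Prop :=
  (∀ u v, ⟪H u, v⟫ = ⟪u, H v⟫) ∧ ∀ u, 0 ≤ ⟪H u, u⟫

noncomputable def hess {n : ℕ} (f : EuclideanSpace ℝ (Fin n) → ℝ)
    (x : EuclideanSpace ℝ (Fin n)) :
    EuclideanSpace ℝ (Fin n) →L[ℝ] EuclideanSpace ℝ (Fin n) :=
  fderiv ℝ (gradient f) x

set_option synthInstance.maxHeartbeats 1000000
set_option maxHeartbeats 1000000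

lemma grad_contDiff {n : ℕ} (f : EuclideanSpace ℝ (Fin n) → ℝ) (hf : ContDiff ℝ 2 f) :
    ContDiff ℝ 1 (gradient f) := by
  have h1 : ContDiff ℝ 1 (fderiv ℝ f) := hf.fderiv_right (by norm_num)
  have := ((InnerProductSpace.toDual ℝ (EuclideanSpace ℝ (Fin n))).symm.contDiff (n := 1)).comp h1
  exact this

lemma grad_hasFDerivAt {n : ℕ} (f : EuclideanSpace ℝ (Fin n) → ℝ) (hf : ContDiff ℝ 2 f)
    (y : EuclideanSpace ℝ (Fin n)) : HasFDerivAt (gradient f) (hess f y) y :=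
  (((grad_contDiff f hf).differentiable one_ne_zero) y).hasFDerivAt

lemma grad_taylor {n : ℕ} (f : EuclideanSpace ℝ (Fin n) → ℝ) (hf : ContDiff ℝ 2 f)
    (L : ℝ) (hLip : ∀ x y, ‖hess f x - hess f y‖ ≤ L * ‖x - y‖)
    (x p : EuclideanSpace ℝ (Fin n)) :
    ‖gradient f (x + p) - gradient f x - hess f x p‖ ≤ L / 2 * ‖p‖ ^ 2 := by
  set ψ : ℝ → EuclideanSpace ℝ (Fin n) :=
    fun t => gradient f (x + t • p) - gradient f x - t • (hess f x p) with hψdef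
  have hψ : ∀ t : ℝ, HasDerivAt ψ (hess f (x + t • p) p - hess f x p) t := by
    intro t
    have h1 : HasDerivAt (fun t : ℝ => x + t • p) p t := by
      simpa using ((hasDerivAt_id t).smul_const p).const_add x
    have h2 : HasDerivAt (fun t : ℝ => gradient f (x + t • p)) (hess f (x + t • p) p) t :=
      (grad_hasFDerivAt f hf (x + t • p)).comp_hasDerivAt (l := gradient f) t h1
    have h3 : HasDerivAt (fun t : ℝ => t • (hess f x p)) (hess f x p) t := by
      simpa using (hasDerivAt_id t).smul_const (hess f x p)
    exact (h2.sub_const (gradient f x)).sub h3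
  have hB : ∀ t : ℝ, HasDerivAt (fun t => L / 2 * ‖p‖ ^ 2 * t ^ 2) (L * ‖p‖ ^ 2 * t) t := by
    intro t
    have := (hasDerivAt_pow 2 t).const_mul (L / 2 * ‖p‖ ^ 2)
    convert this using 1
    · rfl
    · rfl
    ring
  have bound : ∀ t ∈ Ico (0 : ℝ) 1,
      ‖hess f (x + t • p) p - hess f x p‖ ≤ L * ‖p‖ ^ 2 * t := by
    intro t ht
    have h1 : ‖hess f (x + t • p) p - hess f x p‖ ≤ ‖hess f (x + t • p) - hess f x‖ * ‖p‖ := by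
      simpa using (hess f (x + t • p) - hess f x).le_opNorm p
    have h2 : ‖hess f (x + t • p) - hess f x‖ ≤ L * (t * ‖p‖) := by
      have := hLip (x + t • p) x
      simpa [norm_smul, abs_of_nonneg ht.1] using this
    calc ‖hess f (x + t • p) p - hess f x p‖ ≤ (L * (t * ‖p‖)) * ‖p‖ :=
          h1.trans (mul_le_mul_of_nonneg_right h2 (norm_nonneg p))
      _ = L * ‖p‖ ^ 2 * t := by ring
  have key := image_norm_le_of_norm_deriv_right_le_deriv_boundary
    (f := ψ) (f' := fun t => hess f (x + t • p) p - hess f x p) (a := 0) (b := 1)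
    (fun t _ => (hψ t).continuousAt.continuousWithinAt)
    (fun t _ => (hψ t).hasDerivWithinAt)
    (by simp [hψdef]) hB bound (Set.right_mem_Icc.2 zero_le_one)
  simpa [hψdef] using key

/-- Gradient bound at the projected test point: with an orthogonal projection `P` such that
`H∘P = H` and `‖(H − ∇²f(x))∘P‖ ≤ η`, the step `∇f(x) + (H + αI)(x⁺ − x) = 0` with
`α = (L/2)r + η`, `r = ‖x⁺ − x‖`, and `y⁺ = x + P(x⁺ − x)` satisfies
`‖∇f(y⁺)‖ ≤ 2ηr + Lr²`. -/
theorem gradient_bound_projected_point {n : ℕ}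
    (f : EuclideanSpace ℝ (Fin n) → ℝ) (hf : ContDiff ℝ 2 f)
    (L : ℝ) (hL : 0 < L)
    (hLip : ∀ x y, ‖hess f x - hess f y‖ ≤ L * ‖x - y‖)
    (x xp : EuclideanSpace ℝ (Fin n))
    (H P : EuclideanSpace ℝ (Fin n) →L[ℝ] EuclideanSpace ℝ (Fin n))
    (hH : IsSymmPSD H)
    (hPsym : ∀ u v, ⟪P u, v⟫ = ⟪u, P v⟫) (hPidem : P.comp P = P)
    (hHP : H.comp P = H)
    (η : ℝ) (hη : 0 ≤ η) (hHerr : ‖(H - hess f x).comp P‖ ≤ η)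
    (α : ℝ) (hα : α = L / 2 * ‖xp - x‖ + η)
    (hstep : gradient f x + H (xp - x) + α • (xp - x) = 0)
    (yp : EuclideanSpace ℝ (Fin n)) (hyp : yp = x + P (xp - x)) :
    ‖gradient f yp‖ ≤ 2 * η * ‖xp - x‖ + L * ‖xp - x‖ ^ 2 := by
  set s := xp - x with hs
  set p := P s with hp
  -- P has norm ≤ 1 on s
  have hPP : P (P s) = P s := by
    have := congrArg (fun T => T s) hPidem
    simpa using this
  have hple : ‖p‖ ≤ ‖s‖ := by
    have h1 : ‖p‖ ^ 2 = ⟪P s, P s⟫ := (real_inner_self_eq_norm_sq (P s)).symm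
    have h2 : ⟪P s, P s⟫ = ⟪s, P s⟫ := by
      rw [hPsym s (P s), hPP]
    have h3 : ⟪s, P s⟫ ≤ ‖s‖ * ‖P s‖ := real_inner_le_norm s (P s)
    nlinarith [norm_nonneg (P s), norm_nonneg s]
  -- Taylor remainder
  have hT := grad_taylor f hf L hLip x p
  -- identity
  have hHs : H p = H s := by
    have := congrArg (fun T => T s) hHP
    simpa using this
  have hgx : gradient f x = -(H s) - α • s := by
    have := hstep
    linear_combination (norm := module) this
  have hid : gradient f yp = (gradient f (x + p) - gradient f x - hess f x p)
      + ((hess f x - H).comp P) s - α • s := by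
    rw [hyp]
    simp only [ContinuousLinearMap.comp_apply, ContinuousLinearMap.sub_apply, ← hp, ← hs]
    rw [hgx, hHs]
    module
  have hAs : ‖((hess f x - H).comp P) s‖ ≤ η * ‖s‖ := by
    have h1 : ((hess f x - H).comp P) s = -(((H - hess f x).comp P) s) := by
      simp [ContinuousLinearMap.comp_apply, ContinuousLinearMap.sub_apply]
    rw [h1, norm_neg]
    exact (((H - hess f x).comp P).le_opNorm s).trans
      (mul_le_mul_of_nonneg_right hHerr (norm_nonneg s))
  have hTp : ‖gradient f (x + p) - gradient f x - hess f x p‖ ≤ L / 2 * ‖s‖ ^ 2 := by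
    refine hT.trans ?_
    have := pow_le_pow_left₀ (norm_nonneg p) hple 2
    nlinarith
  have hαs : ‖α • s‖ = α * ‖s‖ := by
    rw [norm_smul, Real.norm_eq_abs, abs_of_nonneg]
    rw [hα]; positivity
  calc ‖gradient f yp‖
      ≤ ‖gradient f (x + p) - gradient f x - hess f x p‖
        + ‖((hess f x - H).comp P) s‖ + ‖α • s‖ := by
        rw [hid]
        refine (norm_sub_le _ _).trans ?_
        gcongr
        exact norm_add_le _ _
    _ ≤ L / 2 * ‖s‖ ^ 2 + η * ‖s‖ + (L / 2 * ‖s‖ + η) * ‖s‖ := by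
        rw [hαs, hα]; gcongr
    _ = 2 * η * ‖s‖ + L * ‖s‖ ^ 2 := by ring
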